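/- There exists w₀ ∈ W_G such that w₀·δ_G = δ_G − Σ_{θ∈Λ} θ. -/

import Mathlib

open scoped RealInnerProductSpace

/-- The reflection in the hyperplane orthogonal to `α`. -/
noncomputable def rootReflection {V : Type*} [NormedAddCommGroup V] [InnerProductSpace ℝ V]
    [FiniteDimensional ℝ V] (α : V) : V ≃ₗᵢ[ℝ] V :=
  Submodule.reflection ((ℝ ∙ α)ᗮ)

/-- The Weyl group: the group generated by the reflections in the roots. -/
noncomputable def weylGroup {V : Type*} [NormedAddCommGroup V] [InnerProductSpace ℝ V]
    [FiniteDimensional ℝ V] (Φ : Finset V) : Subgroup (V ≃ₗᵢ[ℝ] V) :=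
  Subgroup.closure { w | ∃ α ∈ Φ, w = rootReflection α }

section Aux

open Finset

variable {V : Type*} [NormedAddCommGroup V] [InnerProductSpace ℝ V] [FiniteDimensional ℝ V]

lemma rr_apply (α v : V) :
    rootReflection α v = v - ((2:ℝ) * (⟪α, v⟫ / (‖α‖ ^ 2))) • α := by
  rw [rootReflection]
  rw [Submodule.reflection_orthogonal_apply, Submodule.reflection_singleton_apply]
  rw [← Nat.cast_smul_eq_nsmul ℝ, smul_smul]
  rw [neg_sub]
  norm_num

lemma rr_symm (α : V) : (rootReflection α).symm = rootReflection α := Submodule.reflection_symm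

lemma rr_self (α : V) : rootReflection α α = -α :=
  Submodule.reflection_orthogonalComplement_singleton_eq_neg α

lemma weyl_maps (Φ : Finset V) (hrefl : ∀ α ∈ Φ, ∀ β ∈ Φ, rootReflection α β ∈ Φ) :
    ∀ w ∈ weylGroup Φ, (∀ α ∈ Φ, w α ∈ Φ) ∧ (∀ α ∈ Φ, w.symm α ∈ Φ) := by
  intro w hw
  refine Subgroup.closure_induction
    (p := fun g _ => (∀ α ∈ Φ, g α ∈ Φ) ∧ (∀ α ∈ Φ, g.symm α ∈ Φ)) ?_ ?_ ?_ ?_ hw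
  · rintro x ⟨α, hα, rfl⟩
    exact ⟨hrefl α hα, by rw [rr_symm]; exact hrefl α hα⟩
  · constructor <;> intro α hα <;> exact hα
  · rintro x y hx hy ⟨hx1, hx2⟩ ⟨hy1, hy2⟩
    constructor
    · intro α hα
      rw [LinearIsometryEquiv.coe_mul]
      exact hx1 _ (hy1 α hα)
    · intro α hα
      rw [LinearIsometryEquiv.mul_def, LinearIsometryEquiv.symm_trans]
      exact hy2 _ (hx2 α hα)
  · rintro x hx ⟨h1, h2⟩
    refine ⟨by simpa [LinearIsometryEquiv.inv_def] using h2, ?_⟩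
    intro α hα
    simpa [LinearIsometryEquiv.inv_def] using h1 α hα

lemma weyl_finite (Φ : Finset V) (hspan : Submodule.span ℝ (Φ : Set V) = ⊤)
    (hrefl : ∀ α ∈ Φ, ∀ β ∈ Φ, rootReflection α β ∈ Φ) :
    Finite (weylGroup Φ) := by
  have hmaps := weyl_maps Φ hrefl
  let F : weylGroup Φ → ({x // x ∈ Φ} → {x // x ∈ Φ}) :=
    fun w x => ⟨(w : V ≃ₗᵢ[ℝ] V) x.1, (hmaps _ w.2).1 x.1 x.2⟩
  have hinj : Function.Injective F := by
    intro w₁ w₂ h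
    have hag : ∀ x ∈ (Φ : Set V), (w₁ : V ≃ₗᵢ[ℝ] V) x = (w₂ : V ≃ₗᵢ[ℝ] V) x := by
      intro x hx
      exact congrArg Subtype.val (congrFun h ⟨x, hx⟩)
    have : ∀ v : V, (w₁ : V ≃ₗᵢ[ℝ] V) v = (w₂ : V ≃ₗᵢ[ℝ] V) v := by
      intro v
      have hv : v ∈ Submodule.span ℝ (Φ : Set V) := by rw [hspan]; trivial
      induction hv using Submodule.span_induction with
      | mem x hx => exact hag x hx
      | zero => simp
      | add x y _ _ hx hy => simp [map_add, hx, hy]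
      | smul a x _ hx => simp [map_smul, hx]
    exact Subtype.ext (LinearIsometryEquiv.ext this)
  exact Finite.of_injective F hinj

open scoped Classical in
lemma sum_reflect_eq (Φ ΦGp : Finset V) (f : V →ₗ[ℝ] ℝ)
    (hΦneg : ∀ α ∈ Φ, -α ∈ Φ) (hf0 : ∀ α ∈ Φ, f α ≠ 0)
    (hmem : ∀ α, α ∈ ΦGp ↔ α ∈ Φ ∧ 0 < f α)
    (w : V ≃ₗᵢ[ℝ] V) (hw : ∀ α ∈ Φ, w α ∈ Φ) (hw' : ∀ α ∈ Φ, w.symm α ∈ Φ) :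
    ∑ θ ∈ ΦGp, w θ
      = ∑ θ ∈ ΦGp, θ - (2:ℝ) • ∑ θ ∈ ΦGp.filter (fun θ => w.symm θ ∉ ΦGp), θ := by
  have hPsub : ∀ α ∈ ΦGp, α ∈ Φ := fun α hα => ((hmem α).1 hα).1
  have hneg_mem : ∀ θ ∈ Φ, θ ∉ ΦGp → -θ ∈ ΦGp := by
    intro θ hθ hn
    refine (hmem _).2 ⟨hΦneg θ hθ, ?_⟩
    have h1 : f θ ≠ 0 := hf0 θ hθ
    have h2 : ¬ 0 < f θ := fun h => hn ((hmem θ).2 ⟨hθ, h⟩)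
    have : f θ < 0 := lt_of_le_of_ne (not_lt.1 h2) h1
    simpa using this
  have hnot_both : ∀ θ, θ ∈ ΦGp → -θ ∉ ΦGp := by
    intro θ hθ hn
    have h1 : 0 < f θ := ((hmem θ).1 hθ).2
    have h2 : 0 < f (-θ) := ((hmem (-θ)).1 hn).2
    simp only [map_neg] at h2
    linarith
  set Q := ΦGp.image ⇑w with hQdef
  have hQiff : ∀ θ, θ ∈ Q ↔ w.symm θ ∈ ΦGp := by
    intro θ
    simp only [hQdef, Finset.mem_image]
    constructor
    · rintro ⟨η, hη, rfl⟩; simpa using hη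
    · intro h; exact ⟨w.symm θ, h, by simp⟩
  have hQsub : ∀ θ ∈ Q, θ ∈ Φ := by
    intro θ hθ
    have := hPsub _ ((hQiff θ).1 hθ)
    have h2 := hw _ this
    simpa using h2
  have h1 : ∑ θ ∈ ΦGp, w θ = ∑ θ ∈ Q, θ := by
    rw [hQdef, Finset.sum_image (fun a _ b _ h => w.injective h)]
  have hsplitP := Finset.sum_filter_add_sum_filter_not ΦGp (fun θ => θ ∈ Q) (id : V → V)
  have hsplitQ := Finset.sum_filter_add_sum_filter_not Q (fun θ => θ ∈ ΦGp) (id : V → V)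
  have hPQ : Q.filter (fun θ => θ ∈ ΦGp) = ΦGp.filter (fun θ => θ ∈ Q) := by
    ext θ; simp only [Finset.mem_filter]; tauto
  have hneg_img : Q.filter (fun θ => θ ∉ ΦGp)
      = (ΦGp.filter (fun θ => θ ∉ Q)).image (fun θ => -θ) := by
    ext θ
    simp only [Finset.mem_filter, Finset.mem_image]
    constructor
    · rintro ⟨hθQ, hθn⟩
      refine ⟨-θ, ⟨?_, ?_⟩, neg_neg θ⟩
      · exact hneg_mem θ (hQsub θ hθQ) hθn
      · intro hc
        have h1 := (hQiff (-θ)).1 hc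
        have h2 := (hQiff θ).1 hθQ
        rw [map_neg] at h1
        exact hnot_both _ h2 h1
    · rintro ⟨η, ⟨hηP, hηnQ⟩, rfl⟩
      constructor
      · rw [hQiff, map_neg]
        have hη : η ∈ Φ := hPsub _ hηP
        have h1 : w.symm η ∈ Φ := hw' _ hη
        have h2 : w.symm η ∉ ΦGp := fun h => hηnQ ((hQiff η).2 h)
        exact hneg_mem _ h1 h2
      · exact hnot_both _ hηP
  have hnegsum : ∑ θ ∈ Q.filter (fun θ => θ ∉ ΦGp), θ
      = - ∑ θ ∈ ΦGp.filter (fun θ => θ ∉ Q), θ := by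
    rw [hneg_img, Finset.sum_image (fun a _ b _ h => neg_injective h), Finset.sum_neg_distrib]
  simp only [id] at hsplitP hsplitQ
  rw [h1, ← hsplitQ, hPQ, hnegsum]
  have h2 : ∑ θ ∈ ΦGp.filter (fun θ => θ ∈ Q), θ
      = ∑ θ ∈ ΦGp, θ - ∑ θ ∈ ΦGp.filter (fun θ => θ ∉ Q), θ := by
    rw [← hsplitP]; abel
  rw [h2]
  have : (ΦGp.filter fun θ => w.symm θ ∉ ΦGp) = ΦGp.filter (fun θ => θ ∉ Q) := by
    ext θ
    simp only [Finset.mem_filter, hQiff]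
  rw [this, two_smul]
  abel

end Aux


theorem stmt6 {V : Type*} [NormedAddCommGroup V] [InnerProductSpace ℝ V] [FiniteDimensional ℝ V]
    (Φ : Finset V) (hΦ0 : (0 : V) ∉ Φ)
    (hspan : Submodule.span ℝ (Φ : Set V) = ⊤)
    (hred : ∀ α ∈ Φ, ∀ t : ℝ, t • α ∈ Φ → t = 1 ∨ t = -1)
    (hrefl : ∀ α ∈ Φ, ∀ β ∈ Φ, rootReflection α β ∈ Φ)
    (ΦGp : Finset V)
    (hΦGp : ∃ f : V →ₗ[ℝ] ℝ, (∀ α ∈ Φ, f α ≠ 0) ∧ ∀ α, α ∈ ΦGp ↔ α ∈ Φ ∧ 0 < f α)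
    (δG : V) (hδG : δG = (2⁻¹ : ℝ) • ∑ α ∈ ΦGp, α)
    (ΦK : Finset V) (hΦKsub : ΦK ⊆ Φ)
    (hΦKneg : ∀ α ∈ ΦK, -α ∈ ΦK)
    (hΦKrefl : ∀ α ∈ ΦK, ∀ β ∈ ΦK, rootReflection α β ∈ ΦK)
    (ΦKp : Finset V) (hΦKp : ∀ α, α ∈ ΦKp ↔ α ∈ ΦK ∧ α ∈ ΦGp)
    (δK : V) (hδK : δK = (2⁻¹ : ℝ) • ∑ α ∈ ΦKp, α)
    (Λ : Finset V) (hΛ : ∀ θ, θ ∈ Λ ↔ θ ∈ ΦGp ∧ ⟪θ, δK⟫ < 0)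
    (hinner : ∃ x : V, (∀ θ ∈ Φ, ∃ n : ℤ, ⟪θ, x⟫ = n / 2) ∧
      (∀ θ, θ ∈ ΦK ↔ θ ∈ Φ ∧ ∃ n : ℤ, ⟪θ, x⟫ = (n : ℝ))) :
    ∃ w₀ ∈ weylGroup Φ, w₀ δG = δG - ∑ θ ∈ Λ, θ := by
  classical
  obtain ⟨f, hf0, hfmem⟩ := hΦGp
  have hPsub : ∀ α ∈ ΦGp, α ∈ Φ := fun α hα => ((hfmem α).1 hα).1
  have hfpos : ∀ α ∈ ΦGp, 0 < f α := fun α hα => ((hfmem α).1 hα).2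
  have hΦneg : ∀ α ∈ Φ, -α ∈ Φ := by
    intro α hα
    have := hrefl α hα α hα
    rwa [rr_self] at this
  have hmaps := weyl_maps Φ hrefl
  -- the dual vector u with ⟪u, x⟫ = f x
  set u : V := (InnerProductSpace.toDual ℝ V).symm (LinearMap.toContinuousLinearMap f) with hu_def
  have hu : ∀ x : V, ⟪u, x⟫ = f x := by
    intro x
    rw [hu_def]
    exact InnerProductSpace.toDual_symm_apply
  have hu' : ∀ x : V, ⟪x, u⟫ = f x := fun x => by rw [real_inner_comm]; exact hu x
  -- choose ε
  have hε : ∃ ε : ℝ, 0 < ε ∧ ∀ θ ∈ Λ, ⟪θ, δK⟫ + ε * f θ < 0 := by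
    rcases Λ.eq_empty_or_nonempty with h | h
    · exact ⟨1, one_pos, by simp [h]⟩
    · set m := (Λ.image fun θ => (-⟪θ, δK⟫ / f θ : ℝ)).min' (h.image fun θ => (-⟪θ, δK⟫ / f θ : ℝ)) with hm_def
      have hterm : ∀ θ ∈ Λ, 0 < -⟪θ, δK⟫ / f θ := by
        intro θ hθ
        obtain ⟨h1, h2⟩ := (hΛ θ).1 hθ
        exact div_pos (by linarith) (hfpos θ h1)
      have hmpos : 0 < m := by
        obtain ⟨θ₀, hθ₀, hθ₀eq⟩ := Finset.mem_image.1 (Finset.min'_mem _ (h.image fun θ => (-⟪θ, δK⟫ / f θ : ℝ)))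
        rw [hm_def, ← hθ₀eq]
        exact hterm θ₀ hθ₀
      refine ⟨m / 2, by positivity, ?_⟩
      intro θ hθ
      obtain ⟨h1, h2⟩ := (hΛ θ).1 hθ
      have hf := hfpos θ h1
      have hle : m ≤ -⟪θ, δK⟫ / f θ :=
        Finset.min'_le _ _ (Finset.mem_image_of_mem _ hθ)
      have hle' : m * f θ ≤ -⟪θ, δK⟫ := (le_div_iff₀ hf).1 hle
      nlinarith
  obtain ⟨ε, hεpos, hεsmall⟩ := hε
  set v : V := δK + ε • u with hv_def
  have hvθ : ∀ θ : V, ⟪θ, v⟫ = ⟪θ, δK⟫ + ε * f θ := by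
    intro θ
    rw [hv_def, inner_add_right, real_inner_smul_right, hu']
  have hΛv : ∀ θ ∈ ΦGp, (⟪θ, v⟫ < 0 ↔ θ ∈ Λ) := by
    intro θ hθ
    rw [hvθ]
    constructor
    · intro hlt
      by_contra hn
      have : ¬ ⟪θ, δK⟫ < 0 := fun h => hn ((hΛ θ).2 ⟨hθ, h⟩)
      have h2 := hfpos θ hθ
      push_neg at this
      nlinarith
    · intro hθΛ
      exact hεsmall θ hθΛ
  have hvpos : ∀ θ ∈ ΦGp, θ ∉ Λ → 0 < ⟪θ, v⟫ := by
    intro θ hθ hn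
    rw [hvθ]
    have : ¬ ⟪θ, δK⟫ < 0 := fun h => hn ((hΛ θ).2 ⟨hθ, h⟩)
    push_neg at this
    have := hfpos θ hθ
    nlinarith
  have hPneg : ∀ θ ∈ Φ, θ ∉ ΦGp → -θ ∈ ΦGp := by
    intro θ hθ hn
    refine (hfmem _).2 ⟨hΦneg θ hθ, ?_⟩
    have h1 : f θ ≠ 0 := hf0 θ hθ
    have h2 : ¬ 0 < f θ := fun h => hn ((hfmem θ).2 ⟨hθ, h⟩)
    have : f θ < 0 := lt_of_le_of_ne (not_lt.1 h2) h1
    simpa using this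
  have hreg : ∀ θ ∈ Φ, ⟪θ, v⟫ ≠ 0 := by
    intro θ hθ
    by_cases hθP : θ ∈ ΦGp
    · by_cases hθΛ : θ ∈ Λ
      · exact ne_of_lt ((hΛv θ hθP).2 hθΛ)
      · exact ne_of_gt (hvpos θ hθP hθΛ)
    · have h1 : -θ ∈ ΦGp := hPneg θ hθ hθP
      have h2 : ⟪-θ, v⟫ ≠ 0 := by
        by_cases hθΛ : -θ ∈ Λ
        · exact ne_of_lt ((hΛv _ h1).2 hθΛ)
        · exact ne_of_gt (hvpos _ h1 hθΛ)
      intro hc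
      apply h2
      rw [inner_neg_left, hc, neg_zero]
  -- maximize over the Weyl group
  haveI : Finite (weylGroup Φ) := weyl_finite Φ hspan hrefl
  haveI : Nonempty (weylGroup Φ) := ⟨1⟩
  obtain ⟨wmax, hmax⟩ :=
    Finite.exists_max (fun w : weylGroup Φ => ⟪(w : V ≃ₗᵢ[ℝ] V) v, u⟫)
  set w' : V ≃ₗᵢ[ℝ] V := (wmax : V ≃ₗᵢ[ℝ] V) with hw'_def
  have hw'mem : w' ∈ weylGroup Φ := wmax.2
  have hw'Φ : ∀ α ∈ Φ, w' α ∈ Φ := (hmaps _ hw'mem).1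
  have hw'symmΦ : ∀ α ∈ Φ, w'.symm α ∈ Φ := (hmaps _ hw'mem).2
  have hdom : ∀ α ∈ ΦGp, 0 < ⟪α, w' v⟫ := by
    intro α hα
    have hαΦ : α ∈ Φ := hPsub α hα
    have hα0 : α ≠ 0 := fun h => hΦ0 (h ▸ hαΦ)
    have hne : ⟪α, w' v⟫ ≠ 0 := by
      have h1 : ⟪α, w' v⟫ = ⟪w'.symm α, v⟫ := by
        conv_lhs => rw [← w'.apply_symm_apply α]
        exact w'.inner_map_map (w'.symm α) v
      rw [h1]
      exact hreg _ (hw'symmΦ α hαΦ)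
    rcases hne.lt_or_gt with hlt | hgt
    · exfalso
      have hsmem : rootReflection α ∈ weylGroup Φ :=
        Subgroup.subset_closure ⟨α, hαΦ, rfl⟩
      set w'' : weylGroup Φ := ⟨rootReflection α * w', mul_mem hsmem hw'mem⟩ with hw''
      have hcomp : ((w'' : V ≃ₗᵢ[ℝ] V)) v = w' v - ((2:ℝ) * (⟪α, w' v⟫ / (‖α‖ ^ 2))) • α := by
        rw [hw'']
        show (rootReflection α * w') v = _
        rw [LinearIsometryEquiv.coe_mul, Function.comp_apply, rr_apply]
      have hval : ⟪(w'' : V ≃ₗᵢ[ℝ] V) v, u⟫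
          = ⟪w' v, u⟫ - (2 * (⟪α, w' v⟫ / (‖α‖ ^ 2))) * f α := by
        rw [hcomp]
        simp only [inner_sub_left, real_inner_smul_left, hu', map_sub, map_smul, smul_eq_mul]
      have hcneg : (2 * (⟪α, w' v⟫ / (‖α‖ ^ 2))) * f α < 0 := by
        have h1 : (0:ℝ) < ‖α‖ ^ 2 := pow_pos (norm_pos_iff.mpr hα0) 2
        have h2 := hfpos α hα
        have : ⟪α, w' v⟫ / (‖α‖ ^ 2) < 0 := div_neg_of_neg_of_pos hlt h1
        nlinarith
      have := hmax w''
      rw [hval] at this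
      have hww : ⟪(wmax : V ≃ₗᵢ[ℝ] V) v, u⟫ = ⟪w' v, u⟫ := rfl
      rw [hww] at this
      linarith
    · exact hgt
  have hsign : ∀ β ∈ Φ, (0 < f β ↔ 0 < ⟪β, w' v⟫) := by
    intro β hβ
    constructor
    · intro h
      exact hdom β ((hfmem β).2 ⟨hβ, h⟩)
    · intro h
      by_contra hn
      have h1 : β ∉ ΦGp := fun hc => hn (hfpos β hc)
      have h2 : -β ∈ ΦGp := hPneg β hβ h1
      have h3 := hdom _ h2
      rw [inner_neg_left] at h3
      linarith
  -- final element
  refine ⟨w'.symm, ?_, ?_⟩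
  · have h1 := inv_mem hw'mem
    rwa [LinearIsometryEquiv.inv_def] at h1
  · have hkey := sum_reflect_eq Φ ΦGp f hΦneg hf0 hfmem w'.symm
      hw'symmΦ (by simpa using hw'Φ)
    have hN : (ΦGp.filter fun θ => w'.symm.symm θ ∉ ΦGp) = Λ := by
      ext θ
      rw [Finset.mem_filter]
      simp only [LinearIsometryEquiv.symm_symm]
      constructor
      · rintro ⟨hθP, hθn⟩
        refine (hΛ θ).2 ⟨hθP, ?_⟩
        have hθΦ : θ ∈ Φ := hPsub θ hθP
        have hwθΦ : w' θ ∈ Φ := hw'Φ θ hθΦ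
        have h1 : ¬ 0 < f (w' θ) := fun h => hθn ((hfmem _).2 ⟨hwθΦ, h⟩)
        have h2 : ¬ 0 < ⟪w' θ, w' v⟫ := fun h => h1 ((hsign _ hwθΦ).2 h)
        rw [w'.inner_map_map] at h2
        have h3 := hreg θ hθΦ
        have h4 : ⟪θ, v⟫ < 0 := lt_of_le_of_ne (not_lt.1 h2) h3
        exact ((hΛ θ).1 ((hΛv θ hθP).1 h4)).2
      · intro hθΛ
        have hθP : θ ∈ ΦGp := ((hΛ θ).1 hθΛ).1
        refine ⟨hθP, ?_⟩
        intro hc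
        have hθΦ : θ ∈ Φ := hPsub θ hθP
        have h1 : 0 < f (w' θ) := hfpos _ hc
        have h2 : 0 < ⟪w' θ, w' v⟫ := (hsign _ (hw'Φ θ hθΦ)).1 h1
        rw [w'.inner_map_map] at h2
        have h3 : ⟪θ, v⟫ < 0 := (hΛv θ hθP).2 hθΛ
        linarith
    rw [hN] at hkey
    rw [hδG, map_smul, map_sum, hkey, smul_sub, smul_smul]
    norm_num
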